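/- For every integer k ≥ 1, the function u^(k) : [0,1] → [0,1] defined by u^(k)(x) = x if (k+1)·x is an integer, and u^(k)(x) = ⌊(k+1)·x⌋/k otherwise, is a dual feasible function. -/
import Mathlib


/-- A function `u : [0,1] → [0,1]` is *dual feasible* if it maps `[0,1]` into `[0,1]`
and for every finite family `x₁, …, xₙ` of numbers in `[0,1]` with `∑ xⱼ ≤ 1`
one has `∑ u (xⱼ) ≤ 1`. -/
def DualFeasible (u : ℝ → ℝ) : Prop :=
  (∀ x ∈ Set.Icc (0 : ℝ) 1, u x ∈ Set.Icc (0 : ℝ) 1) ∧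
  ∀ (n : ℕ) (x : Fin n → ℝ), (∀ j, x j ∈ Set.Icc (0 : ℝ) 1) →
    ∑ j, x j ≤ 1 → ∑ j, u (x j) ≤ 1

open Classical in
/-- For every integer `k ≥ 1`, the function `u^(k)` with `u^(k)(x) = x` if `(k+1)·x ∈ ℤ`
and `u^(k)(x) = ⌊(k+1)·x⌋ / k` otherwise, is a dual feasible function. -/
theorem u_k_dualFeasible (k : ℕ) (hk : 1 ≤ k) :
    DualFeasible (fun x : ℝ =>
      if ∃ m : ℤ, ((k : ℝ) + 1) * x = (m : ℝ) then x
      else (⌊((k : ℝ) + 1) * x⌋ : ℝ) / (k : ℝ)) := by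
  have hkpos : (0:ℝ) < (k:ℝ) := by exact_mod_cast Nat.lt_of_lt_of_le Nat.zero_lt_one hk
  have hcpos : (0:ℝ) < (k:ℝ) + 1 := by linarith
  constructor
  · intro x hx
    obtain ⟨hx0, hx1⟩ := hx
    by_cases h : ∃ m : ℤ, ((k:ℝ)+1)*x = (m:ℝ)
    · simp only [if_pos h]
      exact ⟨hx0, hx1⟩
    · simp only [if_neg h]
      constructor
      · apply div_nonneg _ (le_of_lt hkpos)
        exact_mod_cast Int.floor_nonneg.mpr (by positivity)
      · rw [div_le_one hkpos]
        have hlt : ((k:ℝ)+1)*x < (k:ℝ)+1 := by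
          rcases lt_or_eq_of_le (by nlinarith : ((k:ℝ)+1)*x ≤ (k:ℝ)+1) with h1 | h1
          · exact h1
          · exact absurd ⟨(k:ℤ)+1, by push_cast; linarith⟩ h
        have : ⌊((k:ℝ)+1)*x⌋ < (k:ℤ)+1 := Int.floor_lt.mpr (by push_cast; linarith)
        have : ⌊((k:ℝ)+1)*x⌋ ≤ (k:ℤ) := by omega
        exact_mod_cast this
  · intro n x hx hsum
    set c : ℝ := (k:ℝ) + 1 with hc
    set P : Fin n → Prop := fun j => ∃ m : ℤ, c * x j = (m:ℝ) with hP
    set S := Finset.univ.filter (fun j => ¬ P j) with hS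
    set T := Finset.univ.filter P with hT
    have hTval : ∀ j ∈ T, c * x j = (⌊c * x j⌋ : ℝ) := by
      intro j hj
      obtain ⟨m, hm⟩ := (Finset.mem_filter.mp hj).2
      rw [hm, Int.floor_intCast]
    set M : ℤ := ∑ j ∈ T, ⌊c * x j⌋ with hM
    set F : ℤ := ∑ j ∈ S, ⌊c * x j⌋ with hF
    have hx0 : ∀ j, 0 ≤ x j := fun j => (hx j).1
    have hM0 : (0:ℤ) ≤ M := Finset.sum_nonneg fun j _ =>
      Int.floor_nonneg.mpr (mul_nonneg (le_of_lt hcpos) (hx0 j))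
    -- split the sum of u
    have hsplit : ∑ j, (if P j then x j else (⌊c * x j⌋ : ℝ) / (k:ℝ))
        = ∑ j ∈ T, x j + (F:ℝ) / (k:ℝ) := by
      rw [← Finset.sum_filter_add_sum_filter_not Finset.univ P]
      congr 1
      · exact Finset.sum_congr rfl fun j hj => if_pos (Finset.mem_filter.mp hj).2
      · push_cast [hF]
        rw [Finset.sum_div]
        exact Finset.sum_congr rfl fun j hj => if_neg (Finset.mem_filter.mp hj).2
    have hTsum : ∑ j ∈ T, x j = (M:ℝ) / c := by
      rw [eq_div_iff (ne_of_gt hcpos), hM, Finset.sum_mul]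
      push_cast
      exact Finset.sum_congr rfl fun j hj => by rw [mul_comm]; exact hTval j hj
    have hTcsum : ∑ j ∈ T, c * x j = (M:ℝ) := by
      rw [hM]; push_cast; exact Finset.sum_congr rfl hTval
    by_cases hSne : S.Nonempty
    · -- F strictly below the sum over S
      have h1 : (F:ℝ) < ∑ j ∈ S, c * x j := by
        rw [hF]
        push_cast
        apply Finset.sum_lt_sum_of_nonempty hSne
        intro j hj
        have hnP : ¬ P j := (Finset.mem_filter.mp hj).2
        refine lt_of_le_of_ne (Int.floor_le _) fun h => hnP ⟨⌊c * x j⌋, h.symm⟩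
      have h2 : ∑ j ∈ S, c * x j + (M:ℝ) ≤ c := by
        have := Finset.sum_filter_add_sum_filter_not Finset.univ P (fun j => c * x j)
        have hsum' : ∑ j, c * x j ≤ c := by
          rw [← Finset.mul_sum]; nlinarith
        rw [← hTcsum]
        calc ∑ j ∈ S, c * x j + ∑ j ∈ T, c * x j
            = ∑ j, c * x j := by rw [add_comm, this]
          _ ≤ c := hsum'
      have h3 : (F:ℝ) + (M:ℝ) < (k:ℝ) + 1 := by rw [← hc]; linarith
      have h4 : F + M < (k:ℤ) + 1 := by exact_mod_cast h3
      have h5 : F + M ≤ (k:ℤ) := by omega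
      have h5' : (F:ℝ) + (M:ℝ) ≤ (k:ℝ) := by exact_mod_cast h5
      have hM0' : (0:ℝ) ≤ (M:ℝ) := by exact_mod_cast hM0
      calc ∑ j, (if P j then x j else (⌊c * x j⌋ : ℝ) / (k:ℝ))
          = (M:ℝ)/c + (F:ℝ)/(k:ℝ) := by rw [hsplit, hTsum]
        _ ≤ 1 := by
            rw [div_add_div _ _ (ne_of_gt hcpos) (ne_of_gt hkpos),
              div_le_one (by positivity)]
            have : c = (k:ℝ) + 1 := hc
            nlinarith
    · -- S empty: all terms are of the first kind
      have hSE : S = ∅ := Finset.not_nonempty_iff_eq_empty.mp hSne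
      have hF0 : F = 0 := by rw [hF, hSE]; exact Finset.sum_empty
      have : ∑ j, (if P j then x j else (⌊c * x j⌋ : ℝ) / (k:ℝ))
          = ∑ j ∈ T, x j := by
        rw [hsplit, hF0]; simp
      rw [this]
      calc ∑ j ∈ T, x j ≤ ∑ j, x j :=
            Finset.sum_le_sum_of_subset_of_nonneg (Finset.subset_univ T)
              (fun j _ _ => hx0 j)
        _ ≤ 1 := hsum
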